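/- arXiv:2604.04296 — 2 statements merged into one kernel-verified Lean document; each statement's English description precedes it below -/
import Mathlib

section
/- Let f : I → ℝ² be a circuit and u, v ∈ f(I) distinct points. Then there exist arcs g, h : I → ℝ² such that the interiors g⁰ and h⁰ are disjoint, g(I) ∪ h(I) = f(I), and both g and h have endpoint set {u, v}. -/
/-- A circuit: a continuous map on `[a,b]` (with `a < b`) such that
`f x = f y` for `x ≠ y` iff `{x, y} = {a, b}`. -/
def IsCircuit (f : ℝ → ℝ × ℝ) (a b : ℝ) : Prop :=
  a < b ∧ ContinuousOn f (Set.Icc a b) ∧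
    ∀ x ∈ Set.Icc a b, ∀ y ∈ Set.Icc a b, x ≠ y →
      (f x = f y ↔ ({x, y} : Set ℝ) = {a, b})

/-- An arc on `[a,b]`: a continuous injection. -/
def IsArc (f : ℝ → ℝ × ℝ) (a b : ℝ) : Prop :=
  a < b ∧ ContinuousOn f (Set.Icc a b) ∧ Set.InjOn f (Set.Icc a b)

set_option maxHeartbeats 1000000 in
lemma circuit_split_key (f : ℝ → ℝ × ℝ) (a b : ℝ) (hf : IsCircuit f a b)
    (s t : ℝ) (hs : s ∈ Set.Icc a b) (ht : t ∈ Set.Icc a b) (hst : s < t)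
    (hne : f s ≠ f t) :
    ∃ g h : ℝ → ℝ × ℝ, IsArc g a b ∧ IsArc h a b ∧
      (g '' Set.Ioo a b) ∩ (h '' Set.Ioo a b) = ∅ ∧
      g '' Set.Icc a b ∪ h '' Set.Icc a b = f '' Set.Icc a b ∧
      ({g a, g b} : Set (ℝ × ℝ)) = {f s, f t} ∧
      ({h a, h b} : Set (ℝ × ℝ)) = {f s, f t} := by
  obtain ⟨hab, hfc, hF⟩ := hf
  obtain ⟨hsa, hsb⟩ := hs
  obtain ⟨hta, htb⟩ := ht
  have hba : (0:ℝ) < b - a := by linarith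
  have hfab : f a = f b := (hF a ⟨le_refl a, hab.le⟩ b ⟨hab.le, le_refl b⟩ hab.ne).mpr rfl
  have hnab : ¬ (s = a ∧ t = b) := by
    rintro ⟨rfl, rfl⟩; exact hne hfab
  have hL : 0 < (b - t) + (s - a) := by
    rcases lt_or_eq_of_le hsa with h1 | h1
    · linarith
    rcases lt_or_eq_of_le htb with h2 | h2
    · linarith
    · exact absurd ⟨h1.symm, h2⟩ hnab
  set c' : ℝ := (t - s) / (b - a) with hc'def
  set c : ℝ := ((b - t) + (s - a)) / (b - a) with hcdef
  have hc'pos : 0 < c' := div_pos (by linarith) hba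
  have hcpos : 0 < c := div_pos hL hba
  have hc'ba : c' * (b - a) = t - s := by
    rw [hc'def]; field_simp
  have hcba : c * (b - a) = (b - t) + (s - a) := by
    rw [hcdef]; field_simp
  set m : ℝ := a + (b - t) / c with hmdef
  have hcm : c * (m - a) = b - t := by
    rw [hmdef]; field_simp; ring
  have ham : a ≤ m := by
    have : 0 ≤ (b - t) / c := div_nonneg (by linarith) hcpos.le
    rw [hmdef]; linarith
  have hmb : m ≤ b := by
    have h1 : (b - t) / c ≤ b - a := by
      rw [div_le_iff₀ hcpos]; linarith [hcba, mul_comm (b - a) c]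
    rw [hmdef]; linarith
  -- key consequence of circuit injectivity
  have hkey : ∀ p ∈ Set.Icc a b, ∀ q ∈ Set.Icc a b, p ≠ q → f p = f q →
      (p = a ∨ q = a) ∧ (p = b ∨ q = b) := by
    intro p hp q hq hpq hfpq
    have hset := (hF p hp q hq hpq).mp hfpq
    constructor
    · have : a ∈ ({p, q} : Set ℝ) := by rw [hset]; exact Set.mem_insert _ _
      simpa [eq_comm] using this
    · have : b ∈ ({p, q} : Set ℝ) := by rw [hset]; simp
      simpa [eq_comm] using this
  set g : ℝ → ℝ × ℝ := fun x => f (s + c' * (x - a)) with hgdef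
  set h : ℝ → ℝ × ℝ := fun x => if x ≤ m then f (t + c * (x - a)) else f (s - c * (b - x))
    with hhdef
  -- range facts
  have hg_mem : ∀ x, a ≤ x → x ≤ b → s + c' * (x - a) ∈ Set.Icc s t := by
    intro x h1 h2
    constructor
    · have := mul_nonneg hc'pos.le (show (0:ℝ) ≤ x - a by linarith)
      linarith
    · have := mul_le_mul_of_nonneg_left (show x - a ≤ b - a by linarith) hc'pos.le
      linarith [hc'ba]
  have h2_mem : ∀ x, a ≤ x → x ≤ m → t + c * (x - a) ∈ Set.Icc t b := by
    intro x h1 h2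
    constructor
    · have := mul_nonneg hcpos.le (show (0:ℝ) ≤ x - a by linarith)
      linarith
    · have := mul_le_mul_of_nonneg_left (show x - a ≤ m - a by linarith) hcpos.le
      linarith [hcm]
  have h3_mem : ∀ x, m < x → x ≤ b → s - c * (b - x) ∈ Set.Ioc a s := by
    intro x h1 h2
    have hcs : c * (b - x) = (s - a) - c * (x - m) := by linear_combination hcba - hcm
    constructor
    · linarith [mul_pos hcpos (sub_pos.mpr h1), hcs]
    · have := mul_nonneg hcpos.le (show (0:ℝ) ≤ b - x by linarith)
      linarith
  have hst_sub : Set.Icc s t ⊆ Set.Icc a b := Set.Icc_subset_Icc hsa htb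
  have htb_sub : Set.Icc t b ⊆ Set.Icc a b := Set.Icc_subset_Icc hta (le_refl b)
  have has_sub : Set.Ioc a s ⊆ Set.Icc a b := fun x hx => ⟨hx.1.le, le_trans hx.2 hsb⟩
  -- g is an arc
  have hgarc : IsArc g a b := by
    refine ⟨hab, ?_, ?_⟩
    · apply ContinuousOn.comp hfc
      · exact (continuous_const.add (continuous_const.mul (continuous_id.sub
          continuous_const))).continuousOn
      · intro x hx
        exact hst_sub (hg_mem x hx.1 hx.2)
    · intro x hx y hy hxy
      by_contra hxyne
      have hpq : s + c' * (x - a) ≠ s + c' * (y - a) := by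
        intro hI
        apply hxyne
        have := mul_left_cancel₀ hc'pos.ne' (by linarith : c' * (x - a) = c' * (y - a))
        linarith
      have hp := hg_mem x hx.1 hx.2
      have hq := hg_mem y hy.1 hy.2
      obtain ⟨hA, hB⟩ := hkey _ (hst_sub hp) _ (hst_sub hq) hpq hxy
      have hsa' : s = a := by rcases hA with h | h <;> [linarith [hp.1]; linarith [hq.1]]
      have htb' : t = b := by rcases hB with h | h <;> [linarith [hp.2]; linarith [hq.2]]
      exact hnab ⟨hsa', htb'⟩
  -- h is an arc
  have hharc : IsArc h a b := by
    refine ⟨hab, ?_, ?_⟩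
    · -- continuity
      have hcont1 : ContinuousOn h (Set.Icc a m) := by
        apply ContinuousOn.congr (f := fun x => f (t + c * (x - a)))
        · apply ContinuousOn.comp hfc
          · exact (continuous_const.add (continuous_const.mul (continuous_id.sub
              continuous_const))).continuousOn
          · intro x hx
            exact htb_sub (h2_mem x hx.1 hx.2)
        · intro x hx
          simp only [hhdef, if_pos hx.2]
      have hcont2 : ContinuousOn h (Set.Icc m b) := by
        apply ContinuousOn.congr (f := fun x => f (s - c * (b - x)))
        · apply ContinuousOn.comp hfc
          · exact (continuous_const.sub (continuous_const.mul (continuous_const.sub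
              continuous_id))).continuousOn
          · intro x hx
            show s - c * (b - x) ∈ Set.Icc a b
            rcases eq_or_lt_of_le hx.1 with h1 | h1
            · have hxa : s - c * (b - x) = a := by
                rw [← h1]; linear_combination hcm - hcba
              rw [hxa]; exact ⟨le_refl a, hab.le⟩
            · exact has_sub (h3_mem x h1 hx.2)
        · intro x hx
          rcases eq_or_lt_of_le hx.1 with h1 | h1
          · have hxa : s - c * (b - x) = a := by
              rw [← h1]; linear_combination hcm - hcba
            have hxb : t + c * (x - a) = b := by
              rw [← h1]; linear_combination hcm
            simp only [hhdef, if_pos (le_of_eq h1.symm), hxa, hxb, hfab]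
          · simp only [hhdef, if_neg (not_le.mpr h1)]
      rw [← Set.Icc_union_Icc_eq_Icc ham hmb]
      intro x hx
      apply continuousWithinAt_union.mpr
      constructor
      · by_cases hx1 : x ∈ Set.Icc a m
        · exact hcont1 x hx1
        · exact continuousWithinAt_of_notMem_closure (by rwa [isClosed_Icc.closure_eq])
      · by_cases hx2 : x ∈ Set.Icc m b
        · exact hcont2 x hx2
        · exact continuousWithinAt_of_notMem_closure (by rwa [isClosed_Icc.closure_eq])
    · -- injectivity
      intro x hx y hy hxy
      by_contra hxyne
      by_cases hxm : x ≤ m <;> by_cases hym : y ≤ m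
      · simp only [hhdef, if_pos hxm, if_pos hym] at hxy
        have hp := h2_mem x hx.1 hxm
        have hq := h2_mem y hy.1 hym
        have hpq : t + c * (x - a) ≠ t + c * (y - a) := by
          intro hI
          apply hxyne
          have := mul_left_cancel₀ hcpos.ne' (by linarith : c * (x - a) = c * (y - a))
          linarith
        obtain ⟨hA, _⟩ := hkey _ (htb_sub hp) _ (htb_sub hq) hpq hxy
        rcases hA with h | h <;> [linarith [hp.1]; linarith [hq.1]]
      · simp only [hhdef, if_pos hxm, if_neg hym] at hxy
        have hp := h2_mem x hx.1 hxm
        have hq := h3_mem y (not_le.mp hym) hy.2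
        have hpq : t + c * (x - a) ≠ s - c * (b - y) := by
          intro hI; linarith [hp.1, hq.2]
        obtain ⟨hA, _⟩ := hkey _ (htb_sub hp) _ (has_sub hq) hpq hxy
        rcases hA with h | h <;> [linarith [hp.1]; linarith [hq.1]]
      · simp only [hhdef, if_neg hxm, if_pos hym] at hxy
        have hp := h3_mem x (not_le.mp hxm) hx.2
        have hq := h2_mem y hy.1 hym
        have hpq : s - c * (b - x) ≠ t + c * (y - a) := by
          intro hI; linarith [hp.2, hq.1]
        obtain ⟨hA, _⟩ := hkey _ (has_sub hp) _ (htb_sub hq) hpq hxy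
        rcases hA with h | h <;> [linarith [hp.1]; linarith [hq.1]]
      · simp only [hhdef, if_neg hxm, if_neg hym] at hxy
        have hp := h3_mem x (not_le.mp hxm) hx.2
        have hq := h3_mem y (not_le.mp hym) hy.2
        have hpq : s - c * (b - x) ≠ s - c * (b - y) := by
          intro hI
          apply hxyne
          have h5 : c * (b - x) = c * (b - y) := by linarith
          have := mul_left_cancel₀ hcpos.ne' h5
          linarith
        obtain ⟨_, hB⟩ := hkey _ (has_sub hp) _ (has_sub hq) hpq hxy
        rcases hB with h | h <;> [linarith [hp.2]; linarith [hq.2]]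
  -- disjoint interiors
  have hdisj : (g '' Set.Ioo a b) ∩ (h '' Set.Ioo a b) = ∅ := by
    rw [Set.eq_empty_iff_forall_notMem]
    rintro w ⟨⟨x, hx, rfl⟩, ⟨y, hy, hw⟩⟩
    have hp : s + c' * (x - a) ∈ Set.Ioo s t := by
      constructor
      · have := mul_pos hc'pos (sub_pos.mpr hx.1)
        linarith
      · have := mul_lt_mul_of_pos_left (show x - a < b - a by linarith [hx.2]) hc'pos
        linarith [hc'ba]
    by_cases hym : y ≤ m
    · have hq := h2_mem y hy.1.le hym
      have hval : h y = f (t + c * (y - a)) := by simp only [hhdef, if_pos hym]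
      rw [hval] at hw
      have hpq : s + c' * (x - a) ≠ t + c * (y - a) := by
        intro hI; linarith [hp.2, hq.1]
      obtain ⟨hA, _⟩ := hkey _ (hst_sub ⟨hp.1.le, hp.2.le⟩) _ (htb_sub hq) hpq hw.symm
      rcases hA with h' | h' <;> [linarith [hp.1]; linarith [hq.1]]
    · have hq := h3_mem y (not_le.mp hym) hy.2.le
      have hval : h y = f (s - c * (b - y)) := by simp only [hhdef, if_neg hym]
      rw [hval] at hw
      have hpq : s + c' * (x - a) ≠ s - c * (b - y) := by
        intro hI; linarith [hp.1, hq.2]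
      obtain ⟨hA, _⟩ := hkey _ (hst_sub ⟨hp.1.le, hp.2.le⟩) _ (has_sub hq) hpq hw.symm
      rcases hA with h' | h' <;> [linarith [hp.1]; linarith [hq.1]]
  -- union
  have hunion : g '' Set.Icc a b ∪ h '' Set.Icc a b = f '' Set.Icc a b := by
    apply Set.Subset.antisymm
    · rintro w (⟨x, hx, rfl⟩ | ⟨x, hx, rfl⟩)
      · exact ⟨_, hst_sub (hg_mem x hx.1 hx.2), rfl⟩
      · by_cases hxm : x ≤ m
        · exact ⟨_, htb_sub (h2_mem x hx.1 hxm), by simp only [hhdef, if_pos hxm]⟩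
        · exact ⟨_, has_sub (h3_mem x (not_le.mp hxm) hx.2),
            by simp only [hhdef, if_neg hxm]⟩
    · rintro w ⟨z, hz, rfl⟩
      by_cases h1 : t ≤ z
      · right
        have h0 : 0 ≤ (z - t) / c := div_nonneg (by linarith) hcpos.le
        refine ⟨a + (z - t) / c, ⟨by linarith, ?_⟩, ?_⟩
        · have : (z - t) / c ≤ b - a := by
            rw [div_le_iff₀ hcpos]; linarith [hcba, mul_comm (b - a) c, hz.2]
          linarith
        · have hxm : a + (z - t) / c ≤ m := by
            rw [hmdef]
            have : (z - t) / c ≤ (b - t) / c :=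
              (div_le_div_iff_of_pos_right hcpos).mpr (by linarith [hz.2])
            linarith
          have harg : t + c * ((a + (z - t) / c) - a) = z := by field_simp; ring
          simp only [hhdef, if_pos hxm, harg]
      · by_cases h2 : s ≤ z
        · left
          have h0 : 0 ≤ (z - s) / c' := div_nonneg (by linarith) hc'pos.le
          refine ⟨a + (z - s) / c', ⟨by linarith, ?_⟩, ?_⟩
          · have : (z - s) / c' ≤ b - a := by
              rw [div_le_iff₀ hc'pos]
              linarith [hc'ba, mul_comm (b - a) c', not_le.mp h1]
            linarith
          · have harg : s + c' * ((a + (z - s) / c') - a) = z := by field_simp; ring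
            simp only [hgdef, harg]
        · -- a ≤ z < s
          right
          push_neg at h2
          rcases eq_or_lt_of_le hz.1 with h3 | h3
          · -- z = a
            refine ⟨m, ⟨ham, hmb⟩, ?_⟩
            have harg : t + c * (m - a) = b := by linarith [hcm]
            simp only [hhdef, if_pos (le_refl m), harg, ← hfab, ← h3]
          · have h0 : 0 ≤ (s - z) / c := div_nonneg (by linarith) hcpos.le
            refine ⟨b - (s - z) / c, ⟨?_, by linarith⟩, ?_⟩
            · have : (s - z) / c ≤ b - a := by
                rw [div_le_iff₀ hcpos]; linarith [hcba, mul_comm (b - a) c]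
              linarith
            · have hxm : ¬ (b - (s - z) / c ≤ m) := by
                push_neg
                rw [hmdef]
                have h4 : (b - t) / c + (s - z) / c < b - a := by
                  rw [← add_div, div_lt_iff₀ hcpos]
                  linarith [hcba, mul_comm (b - a) c, h3]
                linarith
              have harg : s - c * (b - (b - (s - z) / c)) = z := by field_simp; ring
              simp only [hhdef, if_neg hxm, harg]
  -- endpoints
  have hga : g a = f s := by
    have : s + c' * (a - a) = s := by ring
    simp only [hgdef, this]
  have hgb : g b = f t := by
    have : s + c' * (b - a) = t := by rw [hc'ba]; ring
    simp only [hgdef, this]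
  have hha : h a = f t := by
    have h5 : t + c * (a - a) = t := by ring
    simp only [hhdef, if_pos ham, h5]
  have hhb : h b = f s := by
    by_cases hbm : b ≤ m
    · have hmb' : m = b := le_antisymm hmb hbm
      have h6 := hcm
      rw [hmb'] at h6
      have hsa' : s = a := by linarith [hcba, h6]
      have harg : t + c * (b - a) = b := by linarith [h6]
      simp only [hhdef, if_pos hbm, harg, ← hfab, hsa']
    · have harg : s - c * (b - b) = s := by ring
      simp only [hhdef, if_neg hbm, harg]
  exact ⟨g, h, hgarc, hharc, hdisj, hunion, by rw [hga, hgb],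
    by rw [hha, hhb, Set.pair_comm]⟩

/-- Two distinct points of a circuit divide it into two arcs with disjoint
interiors whose union is the circuit and whose endpoint sets are `{u, v}`. -/
theorem circuit_split (f : ℝ → ℝ × ℝ) (a b : ℝ) (hf : IsCircuit f a b)
    (u v : ℝ × ℝ) (hu : u ∈ f '' Set.Icc a b) (hv : v ∈ f '' Set.Icc a b)
    (huv : u ≠ v) :
    ∃ g h : ℝ → ℝ × ℝ, IsArc g a b ∧ IsArc h a b ∧
      (g '' Set.Ioo a b) ∩ (h '' Set.Ioo a b) = ∅ ∧
      g '' Set.Icc a b ∪ h '' Set.Icc a b = f '' Set.Icc a b ∧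
      ({g a, g b} : Set (ℝ × ℝ)) = {u, v} ∧
      ({h a, h b} : Set (ℝ × ℝ)) = {u, v} := by
  obtain ⟨s, hs, hsu⟩ := hu
  obtain ⟨t, ht, htv⟩ := hv
  have hst : s ≠ t := by
    rintro rfl; exact huv (hsu ▸ htv ▸ rfl)
  rcases hst.lt_or_gt with hlt | hlt
  · obtain ⟨g, h, a1, a2, a3, a4, a5, a6⟩ := circuit_split_key f a b hf s t hs ht hlt
      (by rw [hsu, htv]; exact huv)
    exact ⟨g, h, a1, a2, a3, a4, by rw [a5, hsu, htv], by rw [a6, hsu, htv]⟩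
  · obtain ⟨g, h, a1, a2, a3, a4, a5, a6⟩ := circuit_split_key f a b hf t s ht hs hlt
      (by rw [hsu, htv]; exact huv.symm)
    exact ⟨g, h, a1, a2, a3, a4, by rw [a5, hsu, htv, Set.pair_comm],
      by rw [a6, hsu, htv, Set.pair_comm]⟩
end

section
/- Let f : [a,b] → ℝ² be a non-closed PL map and let c be a point strictly between the vertical lines through f(a) and f(b), not on f([a,b]), and lying strictly below every point of the intersection of the vertical line x = c.1 with f([a,b]). Then the parity N(c, f) equals 1. -/
/-- A PL map on `[a,b]`: affine and nonconstant on each piece of a finite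
partition of `[a,b]`. -/
def IsPLMap (f : ℝ → ℝ × ℝ) (a b : ℝ) : Prop :=
  ∃ (k : ℕ) (t : ℕ → ℝ), 0 < k ∧ t 0 = a ∧ t k = b ∧
    (∀ i < k, t i < t (i + 1)) ∧
    ∀ i < k, ∃ u v : ℝ × ℝ, v ≠ 0 ∧
      ∀ x ∈ Set.Icc (t i) (t (i + 1)), f x = u + x • v

/-- The vertical half-line going up from `c`. -/
def upHalfLine (c : ℝ × ℝ) : Set (ℝ × ℝ) := {p | p.1 = c.1 ∧ c.2 ≤ p.2}

/-- `P(c,f)`: the preimage in `[a,b]` of the intersection of `ℓ(c)` with the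
image of `f`. -/
def Pset (f : ℝ → ℝ × ℝ) (a b : ℝ) (c : ℝ × ℝ) : Set ℝ :=
  {t ∈ Set.Icc a b | f t ∈ upHalfLine c}

/-- A simple component of `P(c,f)`: a connected component such that `f` lies
on opposite sides of `ℓ(c)` immediately before and after it. -/
def IsSimpleComponent (f : ℝ → ℝ × ℝ) (a b : ℝ) (c : ℝ × ℝ)
    (z : Set ℝ) : Prop :=
  (∃ t ∈ Pset f a b c, z = connectedComponentIn (Pset f a b c) t) ∧
  ∃ x y : ℝ, IsLeast z x ∧ IsGreatest z y ∧ ∃ ε > (0 : ℝ),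
    ((∀ s ∈ Set.Ioo (x - ε) x, (f s).1 < c.1) ∧
      (∀ s ∈ Set.Ioo y (y + ε), c.1 < (f s).1)) ∨
    ((∀ s ∈ Set.Ioo (x - ε) x, c.1 < (f s).1) ∧
      (∀ s ∈ Set.Ioo y (y + ε), (f s).1 < c.1))

/-- `N(c,f)`: the parity of the number of simple components of `P(c,f)`. -/
noncomputable def Nparity (f : ℝ → ℝ × ℝ) (a b : ℝ) (c : ℝ × ℝ) : ℕ :=
  (Set.ncard {z : Set ℝ | IsSimpleComponent f a b c z}) % 2

/-- `S(f)` for a non-closed map: the points off the image of `f` lying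
strictly between the vertical lines through `f a` and `f b`. -/
def Sset (f : ℝ → ℝ × ℝ) (a b : ℝ) : Set (ℝ × ℝ) :=
  {p | p ∉ f '' Set.Icc a b ∧
    min (f a).1 (f b).1 < p.1 ∧ p.1 < max (f a).1 (f b).1}

section Helpers
open Set

-- union of two closed sets continuity
theorem myContinuousOn_union {α β : Type*} [TopologicalSpace α] [TopologicalSpace β]
    {f : α → β} {s t : Set α} (hs : IsClosed s) (ht : IsClosed t)
    (hfs : ContinuousOn f s) (hft : ContinuousOn f t) : ContinuousOn f (s ∪ t) := by
  intro x hx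
  have hcs : ContinuousWithinAt f s x := by
    by_cases h : x ∈ s
    · exact hfs x h
    · exact continuousWithinAt_of_notMem_closure (by rwa [hs.closure_eq])
  have hct : ContinuousWithinAt f t x := by
    by_cases h : x ∈ t
    · exact hft x h
    · exact continuousWithinAt_of_notMem_closure (by rwa [ht.closure_eq])
  exact hcs.union hct

theorem myIsClosed_connectedComponentIn {α : Type*} [TopologicalSpace α]
    {F : Set α} (hF : IsClosed F) (x : α) : IsClosed (connectedComponentIn F x) := by
  by_cases h : x ∈ F
  · rw [connectedComponentIn_eq_image h]
    exact (hF.isClosedEmbedding_subtypeVal.isClosedMap _ isClosed_connectedComponent)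
  · rw [connectedComponentIn_eq_empty h]
    exact isClosed_empty

-- sign constancy on an interval without zeros
theorem mySignConst {g : ℝ → ℝ} {s : Set ℝ} (hg : ContinuousOn g s)
    (hs : s.OrdConnected) (hne : ∀ x ∈ s, g x ≠ 0) :
    ∀ x ∈ s, ∀ y ∈ s, (0 < g x ↔ 0 < g y) := by
  have key : ∀ x ∈ s, ∀ y ∈ s, x ≤ y → 0 < g x → 0 < g y := by
    intro x hx y hy hxy hgx
    by_contra hgy
    push_neg at hgy
    have hsub : Icc x y ⊆ s := hs.out hx hy
    have : (0:ℝ) ∈ g '' Icc x y := by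
      apply intermediate_value_Icc' hxy (hg.mono hsub)
      exact ⟨hgy, hgx.le⟩
    obtain ⟨z, hz, hz0⟩ := this
    exact hne z (hsub hz) hz0
  intro x hx y hy
  rcases le_total x y with h | h
  · constructor
    · exact key x hx y hy h
    · intro hgy
      by_contra hgx
      push_neg at hgx
      have hgx' : g x < 0 := lt_of_le_of_ne hgx (hne x hx)
      have hsub : Icc x y ⊆ s := hs.out hx hy
      have : (0:ℝ) ∈ g '' Icc x y := intermediate_value_Icc h (hg.mono hsub) ⟨hgx'.le, hgy.le⟩
      obtain ⟨z, hz, hz0⟩ := this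
      exact hne z (hsub hz) hz0
  · constructor
    · intro hgx
      by_contra hgy
      push_neg at hgy
      have hgy' : g y < 0 := lt_of_le_of_ne hgy (hne y hy)
      have hsub : Icc y x ⊆ s := hs.out hy hx
      have : (0:ℝ) ∈ g '' Icc y x := intermediate_value_Icc h (hg.mono hsub) ⟨hgy'.le, hgx.le⟩
      obtain ⟨z, hz, hz0⟩ := this
      exact hne z (hsub hz) hz0
    · exact key y hy x hx h

theorem myT_mono {t : ℕ → ℝ} {k : ℕ} (h : ∀ i < k, t i < t (i + 1)) :
    ∀ i j, i ≤ j → j ≤ k → t i ≤ t j := by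
  intro i j hij hjk
  induction j with
  | zero => simp_all
  | succ n ih =>
    rcases Nat.eq_or_lt_of_le hij with rfl | hlt
    · exact le_rfl
    · have h1 : t i ≤ t n := ih (Nat.lt_succ_iff.mp hlt) (Nat.le_of_succ_le hjk)
      exact h1.trans (h n (Nat.lt_of_succ_le hjk)).le

theorem myFindPiece {t : ℕ → ℝ} : ∀ (j : ℕ) (x : ℝ), t 0 ≤ x → x < t j →
    ∃ i < j, t i ≤ x ∧ x < t (i + 1) := by
  intro j
  induction j with
  | zero => intro x h0 hx; exact absurd (h0.trans_lt hx) (lt_irrefl _)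
  | succ n ih =>
    intro x h0 hx
    by_cases hn : x < t n
    · obtain ⟨i, hi, h⟩ := ih x h0 hn
      exact ⟨i, hi.trans (Nat.lt_succ_self n), h⟩
    · push_neg at hn
      exact ⟨n, Nat.lt_succ_self n, hn, hx⟩

theorem myPL_continuous {f : ℝ → ℝ × ℝ} {a b : ℝ} (h : IsPLMap f a b) :
    ContinuousOn f (Set.Icc a b) := by
  obtain ⟨k, t, hk, h0, hkb, hmono, haff⟩ := h
  have key : ∀ j ≤ k, ContinuousOn f (Icc (t 0) (t j)) := by
    intro j
    induction j with
    | zero => intro _; rw [Set.Icc_self]; exact continuousOn_singleton f (t 0)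
    | succ n ih =>
      intro hjk
      have hnk : n < k := hjk
      have h1 : t 0 ≤ t n := myT_mono hmono 0 n (Nat.zero_le n) hnk.le
      have h2 : t n ≤ t (n + 1) := (hmono n hnk).le
      rw [← Set.Icc_union_Icc_eq_Icc h1 h2]
      obtain ⟨u, v, _, huv⟩ := haff n hnk
      have hp : ContinuousOn f (Icc (t n) (t (n + 1))) := by
        apply ContinuousOn.congr (f := fun x : ℝ => u + x • v)
        · exact (continuous_const.add (continuous_id.smul continuous_const)).continuousOn
        · intro x hx; exact huv x hx
      exact myContinuousOn_union isClosed_Icc isClosed_Icc (ih hnk.le) hp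
  have := key k le_rfl
  rwa [h0, hkb] at this

end Helpers

/-- If `c ∈ S(f)` lies strictly below every intersection of the vertical line
through `c` with the image of `f`, then `N(c,f) = 1`. -/
theorem Nparity_eq_one (f : ℝ → ℝ × ℝ) (a b : ℝ) (h : IsPLMap f a b)
    (hnc : f a ≠ f b) (c : ℝ × ℝ) (hc : c ∈ Sset f a b)
    (hbelow : ∀ p ∈ f '' Set.Icc a b, p.1 = c.1 → c.2 < p.2) :
    Nparity f a b c = 1 := by
  classical
  obtain ⟨hcim, hminc, hmaxc⟩ := hc
  have hcont : ContinuousOn f (Set.Icc a b) := myPL_continuous h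
  have hcontG : ContinuousOn (fun s => (f s).1) (Set.Icc a b) :=
    continuous_fst.comp_continuousOn hcont
  obtain ⟨k, t, hk, ht0, htk, hmono, haff⟩ := h
  have hab : a < b := by
    have h1 : t 0 < t 1 := hmono 0 hk
    have h2 : t 1 ≤ t k := myT_mono hmono 1 k hk le_rfl
    rw [← ht0, ← htk]; linarith
  have hfa : (f a).1 ≠ c.1 := by
    intro he
    rcases le_total (f a).1 (f b).1 with h | h
    · rw [min_eq_left h] at hminc; rw [he] at hminc; exact lt_irrefl _ hminc
    · rw [max_eq_left h] at hmaxc; rw [he] at hmaxc; exact lt_irrefl _ hmaxc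
  have hfb : (f b).1 ≠ c.1 := by
    intro he
    rcases le_total (f a).1 (f b).1 with h | h
    · rw [max_eq_right h] at hmaxc; rw [he] at hmaxc; exact lt_irrefl _ hmaxc
    · rw [min_eq_right h] at hminc; rw [he] at hminc; exact lt_irrefl _ hminc
  have hxor : (c.1 < (f a).1 ∧ ¬ c.1 < (f b).1) ∨ (¬ c.1 < (f a).1 ∧ c.1 < (f b).1) := by
    rcases le_total (f a).1 (f b).1 with h | h
    · rw [min_eq_left h] at hminc; rw [max_eq_right h] at hmaxc
      exact Or.inr ⟨not_lt.mpr hminc.le, hmaxc⟩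
    · rw [min_eq_right h] at hminc; rw [max_eq_left h] at hmaxc
      exact Or.inl ⟨hmaxc, not_lt.mpr hminc.le⟩
  set Z : Set ℝ := {s ∈ Set.Icc a b | (f s).1 = c.1} with hZdef
  have hPZ : Pset f a b c = Z := by
    ext s
    constructor
    · rintro ⟨hs, he, -⟩; exact ⟨hs, he⟩
    · rintro ⟨hs, he⟩
      exact ⟨hs, he, (hbelow (f s) ⟨s, hs, rfl⟩ he).le⟩
  set W : Set ℝ := {s ∈ Set.Icc a b | (f s).1 ≠ c.1} with hWdef
  have haW : a ∈ W := ⟨Set.left_mem_Icc.mpr hab.le, hfa⟩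
  have hbW : b ∈ W := ⟨Set.right_mem_Icc.mpr hab.le, hfb⟩
  have hZsub : Z ⊆ Set.Icc a b := fun s hs => hs.1
  have hWsub : W ⊆ Set.Icc a b := fun s hs => hs.1
  have hZW : ∀ s ∈ W, s ∉ Z := fun s hs h2 => hs.2 h2.2
  have hWZ : ∀ s ∈ Set.Icc a b, s ∉ Z → s ∈ W := fun s hs h2 => ⟨hs, fun he => h2 ⟨hs, he⟩⟩
  have haZ : a ∉ Z := hZW a haW
  have hbZ : b ∉ Z := hZW b hbW
  have hZclosed : IsClosed Z := by
    have h1 : Z = Set.Icc a b ∩ (fun s => (f s).1) ⁻¹' {c.1} := by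
      ext s; simp [hZdef, Set.mem_sep_iff]
    rw [h1]
    exact hcontG.preimage_isClosed_of_isClosed isClosed_Icc isClosed_singleton
  set comps : Set (Set ℝ) := {z | ∃ t0 ∈ Z, z = connectedComponentIn Z t0} with hcompsdef
  have hcomp_self : ∀ z ∈ comps, ∀ s ∈ z, z = connectedComponentIn Z s := by
    rintro z ⟨t0, ht0', rfl⟩ s hs
    exact (connectedComponentIn_eq hs)
  have hcomp_sub : ∀ z ∈ comps, z ⊆ Z := by
    rintro z ⟨t0, ht0', rfl⟩
    exact connectedComponentIn_subset Z t0
  have hcomp_ne : ∀ z ∈ comps, z.Nonempty := by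
    rintro z ⟨t0, ht0', rfl⟩
    exact ⟨t0, mem_connectedComponentIn ht0'⟩
  have hcomp_cpt : ∀ z ∈ comps, IsCompact z := by
    rintro z ⟨t0, ht0', rfl⟩
    exact isCompact_Icc.of_isClosed_subset (myIsClosed_connectedComponentIn hZclosed t0)
      ((connectedComponentIn_subset Z t0).trans hZsub)
  have hcomp_least : ∀ z ∈ comps, IsLeast z (sInf z) := fun z hz =>
    ⟨(hcomp_cpt z hz).sInf_mem (hcomp_ne z hz),
      fun p hp => csInf_le (hcomp_cpt z hz).bddBelow hp⟩
  have hcomp_great : ∀ z ∈ comps, IsGreatest z (sSup z) := fun z hz =>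
    ⟨(hcomp_cpt z hz).sSup_mem (hcomp_ne z hz),
      fun p hp => le_csSup (hcomp_cpt z hz).bddAbove hp⟩
  have hcomp_ord : ∀ z ∈ comps, z.OrdConnected := by
    rintro z ⟨t0, ht0', rfl⟩
    exact isPreconnected_connectedComponentIn.ordConnected
  have hcomp_lt : ∀ z ∈ comps, a < sInf z ∧ sSup z < b := by
    intro z hz
    have h1 := hZsub (hcomp_sub z hz (hcomp_least z hz).1)
    have h2 := hZsub (hcomp_sub z hz (hcomp_great z hz).1)
    constructor
    · rcases eq_or_lt_of_le h1.1 with he | h; · exact absurd (he ▸ hcomp_sub z hz (hcomp_least z hz).1) haZ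
      exact h
    · rcases eq_or_lt_of_le h2.2 with he | h; · exact absurd (he ▸ hcomp_sub z hz (hcomp_great z hz).1) hbZ
      exact h
  have hcomp_eq : ∀ z ∈ comps, ∀ z' ∈ comps, ∀ s, s ∈ z → s ∈ z' → z = z' := by
    intro z hz z' hz' s hs hs'
    rw [hcomp_self z hz s hs, hcomp_self z' hz' s hs']
  have haff' : ∀ i, ∃ uv : (ℝ × ℝ) × (ℝ × ℝ), i < k →
      ∀ x ∈ Set.Icc (t i) (t (i + 1)), f x = uv.1 + x • uv.2 := by
    intro i
    by_cases hi : i < k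
    · obtain ⟨u, v, _, huv⟩ := haff i hi
      exact ⟨(u, v), fun _ => huv⟩
    · exact ⟨((0, 0), (0, 0)), fun h' => absurd h' hi⟩
  choose uv huv using haff'
  have hpieceG : ∀ i < k, ∀ x ∈ Set.Icc (t i) (t (i + 1)),
      (f x).1 = ((uv i).1).1 + x * ((uv i).2).1 := by
    intro i hi x hx
    rw [huv i hi x hx]
    simp [Prod.fst_add, Prod.smul_fst, smul_eq_mul]
  have hpiece_sub : ∀ i < k, Set.Icc (t i) (t (i + 1)) ⊆ Set.Icc a b := by
    intro i hi s hs
    constructor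
    · rw [← ht0]; exact (myT_mono hmono 0 i (Nat.zero_le i) hi.le).trans hs.1
    · rw [← htk]; exact hs.2.trans (myT_mono hmono (i + 1) k hi le_rfl)
  have hcomps_fin : comps.Finite := by
    set r : ℕ → ℝ := fun i =>
      if ((uv i).2).1 = 0 then t i else (c.1 - ((uv i).1).1) / ((uv i).2).1 with hrdef
    have hF : (t '' Set.Iic k ∪ r '' Set.Iio k).Finite :=
      ((Set.finite_Iic k).image t).union ((Set.finite_Iio k).image r)
    apply Set.Finite.of_finite_image (f := sInf) ?_ ?_
    · apply hF.subset
      rintro x ⟨z, hz, rfl⟩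
      set x := sInf z with hxdef
      have hxz : x ∈ z := (hcomp_least z hz).1
      have hxZ : x ∈ Z := hcomp_sub z hz hxz
      have hxb : x < b := lt_of_le_of_lt ((hcomp_least z hz).2 (hcomp_great z hz).1)
        (hcomp_lt z hz).2
      obtain ⟨i, hik, hile, hilt⟩ := myFindPiece (t := t) k x (by rw [ht0]; exact hxZ.1.1)
        (by rw [htk]; exact hxb)
      have hxpiece : x ∈ Set.Icc (t i) (t (i + 1)) := ⟨hile, hilt.le⟩
      have heq : ((uv i).1).1 + x * ((uv i).2).1 = c.1 := by
        rw [← hpieceG i hik x hxpiece]; exact hxZ.2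
      by_cases hv : ((uv i).2).1 = 0
      · -- whole piece maps to the vertical line; x = t i
        have hpieceZ : Set.Icc (t i) (t (i + 1)) ⊆ Z := by
          intro s hs
          refine ⟨hpiece_sub i hik hs, ?_⟩
          rw [hpieceG i hik s hs, hv, mul_zero, add_zero]
          rw [hv, mul_zero, add_zero] at heq
          exact heq
        have hpc : Set.Icc (t i) (t (i + 1)) ⊆ z := by
          rw [hcomp_self z hz x hxz]
          exact isPreconnected_Icc.subset_connectedComponentIn hxpiece hpieceZ
        have hti : t i ∈ z := hpc ⟨le_refl _, (hmono i hik).le⟩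
        have : x = t i := le_antisymm (csInf_le (hcomp_cpt z hz).bddBelow hti) hile
        exact Or.inl ⟨i, hik.le, this.symm⟩
      · right
        refine ⟨i, hik, ?_⟩
        rw [hrdef]
        dsimp only
        rw [if_neg hv]
        field_simp
        linarith
    · intro z hz z' hz' he
      exact hcomp_eq z hz z' hz' (sInf z) (hcomp_least z hz).1 (he ▸ (hcomp_least z' hz').1)
  have hZne : Z.Nonempty := by
    have hmem : c.1 ∈ Set.uIcc ((f a).1) ((f b).1) := by
      rw [Set.mem_uIcc]
      rcases le_total (f a).1 (f b).1 with h | h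
      · left; rw [min_eq_left h] at hminc; rw [max_eq_right h] at hmaxc
        exact ⟨hminc.le, hmaxc.le⟩
      · right; rw [min_eq_right h] at hminc; rw [max_eq_left h] at hmaxc
        exact ⟨hminc.le, hmaxc.le⟩
    have huicc : Set.uIcc a b = Set.Icc a b := Set.uIcc_of_le hab.le
    have := intermediate_value_uIcc (f := fun s => (f s).1) (a := a) (b := b)
      (by rw [huicc]; exact hcontG)
    obtain ⟨s, hs, hseq⟩ := this hmem
    exact ⟨s, (huicc ▸ hs), hseq⟩
  set gaps : Set (Set ℝ) := {γ | ∃ q ∈ W, γ = connectedComponentIn W q} with hgapsdef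
  have hgap_sub : ∀ γ ∈ gaps, γ ⊆ W := by
    rintro γ ⟨q, hq, rfl⟩; exact connectedComponentIn_subset W q
  have hgap_ne : ∀ γ ∈ gaps, γ.Nonempty := by
    rintro γ ⟨q, hq, rfl⟩; exact ⟨q, mem_connectedComponentIn hq⟩
  have hgap_self : ∀ γ ∈ gaps, ∀ s ∈ γ, γ = connectedComponentIn W s := by
    rintro γ ⟨q, hq, rfl⟩ s hs; exact connectedComponentIn_eq hs
  have hgap_eq : ∀ γ ∈ gaps, ∀ γ' ∈ gaps, ∀ s, s ∈ γ → s ∈ γ' → γ = γ' := by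
    intro γ hγ γ' hγ' s hs hs'
    rw [hgap_self γ hγ s hs, hgap_self γ' hγ' s hs']
  have hgap_ord : ∀ γ ∈ gaps, γ.OrdConnected := by
    rintro γ ⟨q, hq, rfl⟩; exact isPreconnected_connectedComponentIn.ordConnected
  have hgap_max : ∀ γ ∈ gaps, ∀ (v : Set ℝ), IsPreconnected v → v ⊆ W → (γ ∩ v).Nonempty →
      v ⊆ γ := by
    rintro γ ⟨q, hq, rfl⟩ v hv hvW ⟨s, hsγ, hsv⟩
    rw [connectedComponentIn_eq hsγ]
    exact hv.subset_connectedComponentIn hsv hvW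
  set sg : Set ℝ → ZMod 2 := fun γ => if ∃ s ∈ γ, c.1 < (f s).1 then 1 else 0 with hsgdef
  have hsg_gap : ∀ γ ∈ gaps, ∀ p ∈ γ, (sg γ = 1 ↔ c.1 < (f p).1) := by
    intro γ hγ p hp
    have hsub : γ ⊆ Set.Icc a b := (hgap_sub γ hγ).trans hWsub
    have hconst := mySignConst (g := fun s => (f s).1 - c.1)
      (((hcontG.mono hsub)).sub continuousOn_const) (hgap_ord γ hγ)
      (fun x hx => sub_ne_zero_of_ne (hgap_sub γ hγ hx).2)
    have hiff : sg γ = 1 ↔ ∃ s ∈ γ, c.1 < (f s).1 := by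
      simp only [hsgdef]
      by_cases hex : ∃ s ∈ γ, c.1 < (f s).1
      · simp [hex]
      · simp only [if_neg hex]; exact iff_of_false (by decide) hex
    rw [hiff]
    constructor
    · rintro ⟨s, hs, h⟩
      have := (hconst s hs p hp).mp (by linarith)
      linarith
    · intro h; exact ⟨p, hp, h⟩
  have hsg_gap' : ∀ γ ∈ gaps, ∀ p ∈ γ, (sg γ = 0 ↔ (f p).1 < c.1) := by
    intro γ hγ p hp
    have h1 := hsg_gap γ hγ p hp
    have h2 : (f p).1 ≠ c.1 := (hgap_sub γ hγ hp).2
    constructor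
    · intro h0
      have : ¬ c.1 < (f p).1 := fun hlt => by
        rw [← h1] at hlt; rw [h0] at hlt; exact one_ne_zero hlt.symm
      rcases lt_or_gt_of_ne h2 with h | h; · exact h
      · exact absurd h this
    · intro hlt
      rcases (show sg γ = 0 ∨ sg γ = 1 by rw [hsgdef]; dsimp only; split <;> simp) with h | h
      · exact h
      · rw [h1] at h; exact absurd h (not_lt.mpr hlt.le)
  set γa : Set ℝ := connectedComponentIn W a with hγadef
  set γb : Set ℝ := connectedComponentIn W b with hγbdef
  have hγa : γa ∈ gaps := ⟨a, haW, rfl⟩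
  have hγb : γb ∈ gaps := ⟨b, hbW, rfl⟩
  have haγa : a ∈ γa := mem_connectedComponentIn haW
  have hbγb : b ∈ γb := mem_connectedComponentIn hbW
  have hγa_inf : sInf γa = a := by
    apply le_antisymm
    · exact csInf_le ⟨a, fun p hp => ((hgap_sub γa hγa).trans hWsub hp).1⟩ haγa
    · exact le_csInf ⟨a, haγa⟩ (fun p hp => ((hgap_sub γa hγa).trans hWsub hp).1)
  have hγb_sup : sSup γb = b := by
    apply le_antisymm
    · exact csSup_le ⟨b, hbγb⟩ (fun p hp => ((hgap_sub γb hγb).trans hWsub hp).2)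
    · exact le_csSup ⟨b, fun p hp => ((hgap_sub γb hγb).trans hWsub hp).2⟩ hbγb
  have hγab : γa ≠ γb := by
    intro he
    obtain ⟨s, hsZ⟩ := hZne
    have hb' : b ∈ γa := he ▸ hbγb
    have : s ∈ γa := (hgap_ord γa hγa).out haγa hb' (hZsub hsZ)
    exact hZW s (hgap_sub γa hγa this) hsZ
  have hqlex : ∀ z : Set ℝ, ∃ q : ℝ, z ∈ comps →
      q ∈ W ∧ q < sInf z ∧ Set.Ioo q (sInf z) ⊆ W := by
    intro z
    by_cases hz : z ∈ comps
    · have hax : a < sInf z := (hcomp_lt z hz).1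
      have hxb : sInf z < b :=
        lt_of_le_of_lt ((hcomp_least z hz).2 (hcomp_great z hz).1) (hcomp_lt z hz).2
      set Bf := (hcomps_fin.toFinset.filter (fun w => sSup w < sInf z)).image sSup with hBf
      set q0 := (insert a Bf).max' (Finset.insert_nonempty _ _) with hq0
      have hq0x : q0 < sInf z := by
        rw [hq0, Finset.max'_lt_iff]
        intro p hp
        rcases Finset.mem_insert.mp hp with rfl | hp
        · exact hax
        · obtain ⟨w, hw, rfl⟩ := Finset.mem_image.mp hp
          exact (Finset.mem_filter.mp hw).2
      have hq0a : a ≤ q0 := Finset.le_max' _ a (Finset.mem_insert_self a Bf)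
      have hIoo : Set.Ioo q0 (sInf z) ⊆ W := by
        intro s hs
        have hsab : s ∈ Set.Icc a b := ⟨hq0a.trans hs.1.le, (hs.2.trans hxb).le⟩
        apply hWZ s hsab
        intro hsZ
        set w' := connectedComponentIn Z s with hw'def
        have hw' : w' ∈ comps := ⟨s, hsZ, rfl⟩
        have hsw' : s ∈ w' := mem_connectedComponentIn hsZ
        by_cases hsup : sInf z ≤ sSup w'
        · have hxw' : sInf z ∈ w' :=
            (hcomp_ord w' hw').out hsw' (hcomp_great w' hw').1 ⟨hs.2.le, hsup⟩
          have hezz : w' = z := hcomp_eq w' hw' z hz (sInf z) hxw' (hcomp_least z hz).1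
          have : s ∈ z := hezz ▸ hsw'
          exact absurd ((hcomp_least z hz).2 this) (not_le.mpr hs.2)
        · push_neg at hsup
          have hmem : sSup w' ∈ Bf := Finset.mem_image.mpr
            ⟨w', Finset.mem_filter.mpr ⟨hcomps_fin.mem_toFinset.mpr hw', hsup⟩, rfl⟩
          have h1 : sSup w' ≤ q0 := Finset.le_max' _ _ (Finset.mem_insert_of_mem hmem)
          have h2 : s ≤ sSup w' := (hcomp_great w' hw').2 hsw'
          exact absurd hs.1 (not_lt.mpr (h2.trans h1))
      refine ⟨(q0 + sInf z) / 2, fun _ => ⟨?_, by linarith, ?_⟩⟩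
      · exact hIoo ⟨by linarith, by linarith⟩
      · intro s hs; exact hIoo ⟨by linarith [hs.1], hs.2⟩
    · exact ⟨0, fun h' => absurd h' hz⟩
  have hqrex : ∀ z : Set ℝ, ∃ q : ℝ, z ∈ comps →
      q ∈ W ∧ sSup z < q ∧ Set.Ioo (sSup z) q ⊆ W := by
    intro z
    by_cases hz : z ∈ comps
    · have hax : a < sSup z :=
        lt_of_lt_of_le (hcomp_lt z hz).1 ((hcomp_least z hz).2 (hcomp_great z hz).1)
      have hxb : sSup z < b := (hcomp_lt z hz).2
      set Bf := (hcomps_fin.toFinset.filter (fun w => sSup z < sInf w)).image sInf with hBf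
      set q0 := (insert b Bf).min' (Finset.insert_nonempty _ _) with hq0
      have hq0x : sSup z < q0 := by
        rw [hq0, Finset.lt_min'_iff]
        intro p hp
        rcases Finset.mem_insert.mp hp with rfl | hp
        · exact hxb
        · obtain ⟨w, hw, rfl⟩ := Finset.mem_image.mp hp
          exact (Finset.mem_filter.mp hw).2
      have hq0b : q0 ≤ b := Finset.min'_le _ b (Finset.mem_insert_self b Bf)
      have hIoo : Set.Ioo (sSup z) q0 ⊆ W := by
        intro s hs
        have hsab : s ∈ Set.Icc a b := ⟨(hax.trans hs.1).le, hs.2.le.trans hq0b⟩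
        apply hWZ s hsab
        intro hsZ
        set w' := connectedComponentIn Z s with hw'def
        have hw' : w' ∈ comps := ⟨s, hsZ, rfl⟩
        have hsw' : s ∈ w' := mem_connectedComponentIn hsZ
        by_cases hinf : sInf w' ≤ sSup z
        · have hxw' : sSup z ∈ w' :=
            (hcomp_ord w' hw').out (hcomp_least w' hw').1 hsw' ⟨hinf, hs.1.le⟩
          have hezz : w' = z := hcomp_eq w' hw' z hz (sSup z) hxw' (hcomp_great z hz).1
          have : s ∈ z := hezz ▸ hsw'
          exact absurd ((hcomp_great z hz).2 this) (not_le.mpr hs.1)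
        · push_neg at hinf
          have hmem : sInf w' ∈ Bf := Finset.mem_image.mpr
            ⟨w', Finset.mem_filter.mpr ⟨hcomps_fin.mem_toFinset.mpr hw', hinf⟩, rfl⟩
          have h1 : q0 ≤ sInf w' := Finset.min'_le _ _ (Finset.mem_insert_of_mem hmem)
          have h2 : sInf w' ≤ s := (hcomp_least w' hw').2 hsw'
          exact absurd hs.2 (not_lt.mpr (h1.trans h2))
      refine ⟨(sSup z + q0) / 2, fun _ => ⟨?_, by linarith, ?_⟩⟩
      · exact hIoo ⟨by linarith, by linarith⟩
      · intro s hs; exact hIoo ⟨hs.1, by linarith [hs.2]⟩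
    · exact ⟨0, fun h' => absurd h' hz⟩
  choose ql hql using hqlex
  choose qr hqr using hqrex
  set lg : Set ℝ → Set ℝ := fun z => connectedComponentIn W (ql z) with hlgdef
  set rg : Set ℝ → Set ℝ := fun z => connectedComponentIn W (qr z) with hrgdef
  have hlg_gap : ∀ z ∈ comps, lg z ∈ gaps := fun z hz => ⟨ql z, (hql z hz).1, rfl⟩
  have hrg_gap : ∀ z ∈ comps, rg z ∈ gaps := fun z hz => ⟨qr z, (hqr z hz).1, rfl⟩
  have hlg_mem : ∀ z ∈ comps, ∀ s, ql z ≤ s → s < sInf z → s ∈ lg z := by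
    intro z hz s hs1 hs2
    obtain ⟨hqW, hqlt, hIoo⟩ := hql z hz
    have hsub : Set.Icc (ql z) s ⊆ W := by
      intro p hp
      rcases eq_or_lt_of_le hp.1 with he | hlt
      · exact he ▸ hqW
      · exact hIoo ⟨hlt, lt_of_le_of_lt hp.2 hs2⟩
    have := isPreconnected_Icc.subset_connectedComponentIn
      (Set.left_mem_Icc.mpr hs1) hsub
    exact this (Set.right_mem_Icc.mpr hs1)
  have hrg_mem : ∀ z ∈ comps, ∀ s, s ≤ qr z → sSup z < s → s ∈ rg z := by
    intro z hz s hs1 hs2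
    obtain ⟨hqW, hqlt, hIoo⟩ := hqr z hz
    have hsub : Set.Icc s (qr z) ⊆ W := by
      intro p hp
      rcases eq_or_lt_of_le hp.2 with he | hlt
      · exact he ▸ hqW
      · exact hIoo ⟨lt_of_lt_of_le hs2 hp.1, hlt⟩
    have := isPreconnected_Icc.subset_connectedComponentIn
      (Set.right_mem_Icc.mpr hs1) hsub
    exact this (Set.left_mem_Icc.mpr hs1)
  have hlg_lt : ∀ z ∈ comps, ∀ s ∈ lg z, s < sInf z := by
    intro z hz s hs
    obtain ⟨hqW, hqlt, hIoo⟩ := hql z hz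
    by_contra hle
    push_neg at hle
    have hq : ql z ∈ lg z := mem_connectedComponentIn hqW
    have : sInf z ∈ lg z := (hgap_ord (lg z) (hlg_gap z hz)).out hq hs ⟨hqlt.le, hle⟩
    exact hZW _ (hgap_sub (lg z) (hlg_gap z hz) this)
      (hcomp_sub z hz (hcomp_least z hz).1)
  have hrg_lt : ∀ z ∈ comps, ∀ s ∈ rg z, sSup z < s := by
    intro z hz s hs
    obtain ⟨hqW, hqlt, hIoo⟩ := hqr z hz
    by_contra hle
    push_neg at hle
    have hq : qr z ∈ rg z := mem_connectedComponentIn hqW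
    have : sSup z ∈ rg z := (hgap_ord (rg z) (hrg_gap z hz)).out hs hq ⟨hle, hqlt.le⟩
    exact hZW _ (hgap_sub (rg z) (hrg_gap z hz) this)
      (hcomp_sub z hz (hcomp_great z hz).1)
  have hlg_sup : ∀ z ∈ comps, sSup (lg z) = sInf z := by
    intro z hz
    obtain ⟨hqW, hqlt, hIoo⟩ := hql z hz
    apply le_antisymm
    · exact csSup_le ⟨ql z, mem_connectedComponentIn hqW⟩
        (fun p hp => (hlg_lt z hz p hp).le)
    · have hsub : Set.Ico (ql z) (sInf z) ⊆ lg z := fun s hs => hlg_mem z hz s hs.1 hs.2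
      calc sInf z = sSup (Set.Ico (ql z) (sInf z)) := (csSup_Ico hqlt).symm
        _ ≤ sSup (lg z) := csSup_le_csSup
            ⟨sInf z, fun p hp => (hlg_lt z hz p hp).le⟩
            (Set.nonempty_Ico.mpr hqlt) hsub
  have hrg_inf : ∀ z ∈ comps, sInf (rg z) = sSup z := by
    intro z hz
    obtain ⟨hqW, hqlt, hIoo⟩ := hqr z hz
    apply le_antisymm
    · have hsub : Set.Ioc (sSup z) (qr z) ⊆ rg z := fun s hs => hrg_mem z hz s hs.2 hs.1
      calc sInf (rg z) ≤ sInf (Set.Ioc (sSup z) (qr z)) := csInf_le_csInf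
            ⟨sSup z, fun p hp => (hrg_lt z hz p hp).le⟩
            (Set.nonempty_Ioc.mpr hqlt) hsub
        _ = sSup z := csInf_Ioc hqlt
    · exact le_csInf ⟨qr z, mem_connectedComponentIn hqW⟩
        (fun p hp => (hrg_lt z hz p hp).le)
  have hlg_ne : ∀ z ∈ comps, lg z ≠ γb := by
    intro z hz he
    have h1 := hlg_sup z hz
    rw [he, hγb_sup] at h1
    exact absurd (h1 ▸ (hcomp_lt z hz).2) (not_lt.mpr ((hcomp_least z hz).2 (hcomp_great z hz).1))
  have hrg_ne : ∀ z ∈ comps, rg z ≠ γa := by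
    intro z hz he
    have h1 := hrg_inf z hz
    rw [he, hγa_inf] at h1
    exact absurd (h1 ▸ (hcomp_lt z hz).1) (not_lt.mpr ((hcomp_least z hz).2 (hcomp_great z hz).1))
  have hcontδ : ∀ w ∈ Set.Icc a b, (f w).1 ≠ c.1 →
      ∃ δ > 0, ∀ s ∈ Set.Icc a b, |s - w| < δ → (f s).1 ≠ c.1 := by
    intro w hwI hwZ
    have hcw := hcontG w hwI
    obtain ⟨δ, hδpos, hδ⟩ := Metric.continuousWithinAt_iff.mp hcw (|(f w).1 - c.1|)
      (abs_pos.mpr (sub_ne_zero_of_ne hwZ))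
    refine ⟨δ, hδpos, fun s hs hdist he => ?_⟩
    have h2 := hδ hs (show dist s w < δ by rwa [Real.dist_eq])
    rw [Real.dist_eq, he, abs_sub_comm] at h2
    exact lt_irrefl _ h2
  have hclass_sup : ∀ γ ∈ gaps, γ = γb ∨ ∃ z ∈ comps, γ = lg z := by
    intro γ hγ
    obtain ⟨p0, hp0⟩ := hgap_ne γ hγ
    have hsubW := hgap_sub γ hγ
    have hsubI : γ ⊆ Set.Icc a b := hsubW.trans hWsub
    set w := sSup γ with hwdef
    have hbddA : BddAbove γ := ⟨b, fun p hp => (hsubI hp).2⟩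
    have hwa : a ≤ w := (hsubI hp0).1.trans (le_csSup hbddA hp0)
    have hwb : w ≤ b := csSup_le ⟨p0, hp0⟩ (fun p hp => (hsubI hp).2)
    by_cases hwZ : (f w).1 = c.1
    · right
      have hwZ' : w ∈ Z := ⟨⟨hwa, hwb⟩, hwZ⟩
      set z := connectedComponentIn Z w with hzdef
      have hz : z ∈ comps := ⟨w, hwZ', rfl⟩
      have hwz : w ∈ z := mem_connectedComponentIn hwZ'
      have hwγ : w ∉ γ := fun hwγ => (hsubW hwγ).2 hwZ
      have hplt : ∀ p ∈ γ, p < w := fun p hp =>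
        lt_of_le_of_ne (le_csSup hbddA hp) (fun he => hwγ (he ▸ hp))
      have hinfz : sInf z = w := by
        apply le_antisymm (csInf_le (hcomp_cpt z hz).bddBelow hwz)
        by_contra hlt
        push_neg at hlt
        obtain ⟨p, hp, hplt'⟩ := exists_lt_of_lt_csSup ⟨p0, hp0⟩ hlt
        have hpw : p < w := hplt p hp
        set s := (p + w) / 2 with hsdef
        have hs1 : p < s := by rw [hsdef]; linarith
        have hs2 : s < w := by rw [hsdef]; linarith
        have hsz : s ∈ z := (hcomp_ord z hz).out (hcomp_least z hz).1 hwz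
          ⟨by linarith, hs2.le⟩
        obtain ⟨p', hp', hsp'⟩ := exists_lt_of_lt_csSup ⟨p0, hp0⟩ hs2
        have hsγ : s ∈ γ := (hgap_ord γ hγ).out hp hp' ⟨hs1.le, hsp'.le⟩
        exact (hsubW hsγ).2 (hcomp_sub z hz hsz).2
      refine ⟨z, hz, ?_⟩
      obtain ⟨hqW, hqlt, hIoo⟩ := hql z hz
      rw [hinfz] at hqlt
      obtain ⟨p, hp, hqp⟩ := exists_lt_of_lt_csSup ⟨p0, hp0⟩ hqlt
      have hpw : p < w := hplt p hp
      have hplg : p ∈ lg z := hlg_mem z hz p hqp.le (by rw [hinfz]; exact hpw)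
      exact hgap_eq γ hγ (lg z) (hlg_gap z hz) p hp hplg
    · left
      obtain ⟨δ, hδpos, hδ⟩ := hcontδ w ⟨hwa, hwb⟩ hwZ
      set l := max a (w - δ / 2) with hldef
      set m := min b (w + δ / 2) with hmdef
      have hlw : l ≤ w := max_le hwa (by linarith)
      have hwm : w ≤ m := le_min hwb (by linarith)
      have hlm : l ≤ m := hlw.trans hwm
      have hJW : Set.Icc l m ⊆ W := by
        intro s hs
        have hsI : s ∈ Set.Icc a b :=
          ⟨(le_max_left _ _).trans hs.1, hs.2.trans (min_le_left _ _)⟩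
        refine ⟨hsI, hδ s hsI ?_⟩
        rw [abs_sub_lt_iff]
        constructor
        · have h3 : s ≤ w + δ / 2 := hs.2.trans (min_le_right _ _); linarith
        · have h3 : w - δ / 2 ≤ s := (le_max_right _ _).trans hs.1; linarith
      obtain ⟨p, hp, hpgt⟩ := exists_lt_of_lt_csSup ⟨p0, hp0⟩
        (show w - δ / 2 < w by linarith)
      have hpw : p ≤ w := le_csSup hbddA hp
      have hpJ : p ∈ Set.Icc l m :=
        ⟨max_le (hsubI hp).1 hpgt.le, le_min (hsubI hp).2 (by linarith)⟩
      have hJγ : Set.Icc l m ⊆ γ := hgap_max γ hγ _ isPreconnected_Icc hJW ⟨p, hp, hpJ⟩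
      have hwb' : w = b := by
        by_contra hne'
        have hwltb : w < b := lt_of_le_of_ne hwb hne'
        have hmw : w < m := lt_min hwltb (by linarith)
        have hmγ : m ∈ γ := hJγ ⟨hlm, le_refl m⟩
        exact absurd (le_csSup hbddA hmγ) (not_le.mpr hmw)
      have hbγ : b ∈ γ := by
        have hmb : m = b := by rw [hmdef, hwb']; exact min_eq_left (by linarith)
        have hmem := hJγ ⟨hlm, le_refl m⟩
        rwa [hmb] at hmem
      exact hgap_eq γ hγ γb hγb b hbγ hbγb
  have hclass_inf : ∀ γ ∈ gaps, γ = γa ∨ ∃ z ∈ comps, γ = rg z := by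
    intro γ hγ
    obtain ⟨p0, hp0⟩ := hgap_ne γ hγ
    have hsubW := hgap_sub γ hγ
    have hsubI : γ ⊆ Set.Icc a b := hsubW.trans hWsub
    set w := sInf γ with hwdef
    have hbddB : BddBelow γ := ⟨a, fun p hp => (hsubI hp).1⟩
    have hwa : a ≤ w := le_csInf ⟨p0, hp0⟩ (fun p hp => (hsubI hp).1)
    have hwb : w ≤ b := (csInf_le hbddB hp0).trans (hsubI hp0).2
    by_cases hwZ : (f w).1 = c.1
    · right
      have hwZ' : w ∈ Z := ⟨⟨hwa, hwb⟩, hwZ⟩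
      set z := connectedComponentIn Z w with hzdef
      have hz : z ∈ comps := ⟨w, hwZ', rfl⟩
      have hwz : w ∈ z := mem_connectedComponentIn hwZ'
      have hwγ : w ∉ γ := fun hwγ => (hsubW hwγ).2 hwZ
      have hplt : ∀ p ∈ γ, w < p := fun p hp =>
        lt_of_le_of_ne (csInf_le hbddB hp) (fun he => hwγ (he ▸ hp))
      have hsupz : sSup z = w := by
        apply le_antisymm _ (le_csSup (hcomp_cpt z hz).bddAbove hwz)
        by_contra hlt
        push_neg at hlt
        obtain ⟨p, hp, hplt'⟩ := exists_lt_of_csInf_lt ⟨p0, hp0⟩ hlt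
        have hpw : w < p := hplt p hp
        set s := (w + p) / 2 with hsdef
        have hs1 : s < p := by rw [hsdef]; linarith
        have hs2 : w < s := by rw [hsdef]; linarith
        have hsz : s ∈ z := (hcomp_ord z hz).out hwz (hcomp_great z hz).1
          ⟨hs2.le, by linarith⟩
        obtain ⟨p', hp', hsp'⟩ := exists_lt_of_csInf_lt ⟨p0, hp0⟩ hs2
        have hsγ : s ∈ γ := (hgap_ord γ hγ).out hp' hp ⟨hsp'.le, hs1.le⟩
        exact (hsubW hsγ).2 (hcomp_sub z hz hsz).2
      refine ⟨z, hz, ?_⟩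
      obtain ⟨hqW, hqlt, hIoo⟩ := hqr z hz
      rw [hsupz] at hqlt
      obtain ⟨p, hp, hqp⟩ := exists_lt_of_csInf_lt ⟨p0, hp0⟩ hqlt
      have hpw : w < p := hplt p hp
      have hprg : p ∈ rg z := hrg_mem z hz p hqp.le (by rw [hsupz]; exact hpw)
      exact hgap_eq γ hγ (rg z) (hrg_gap z hz) p hp hprg
    · left
      obtain ⟨δ, hδpos, hδ⟩ := hcontδ w ⟨hwa, hwb⟩ hwZ
      set l := max a (w - δ / 2) with hldef
      set m := min b (w + δ / 2) with hmdef
      have hlw : l ≤ w := max_le hwa (by linarith)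
      have hwm : w ≤ m := le_min hwb (by linarith)
      have hlm : l ≤ m := hlw.trans hwm
      have hJW : Set.Icc l m ⊆ W := by
        intro s hs
        have hsI : s ∈ Set.Icc a b :=
          ⟨(le_max_left _ _).trans hs.1, hs.2.trans (min_le_left _ _)⟩
        refine ⟨hsI, hδ s hsI ?_⟩
        rw [abs_sub_lt_iff]
        constructor
        · have h3 : s ≤ w + δ / 2 := hs.2.trans (min_le_right _ _); linarith
        · have h3 : w - δ / 2 ≤ s := (le_max_right _ _).trans hs.1; linarith
      obtain ⟨p, hp, hpgt⟩ := exists_lt_of_csInf_lt ⟨p0, hp0⟩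
        (show w < w + δ / 2 by linarith)
      have hpw : w ≤ p := csInf_le hbddB hp
      have hpJ : p ∈ Set.Icc l m :=
        ⟨max_le (hsubI hp).1 (by linarith), le_min (hsubI hp).2 hpgt.le⟩
      have hJγ : Set.Icc l m ⊆ γ := hgap_max γ hγ _ isPreconnected_Icc hJW ⟨p, hp, hpJ⟩
      have hwa' : w = a := by
        by_contra hne'
        have halt : a < w := lt_of_le_of_ne hwa (Ne.symm hne')
        have hlw' : l < w := max_lt halt (by linarith)
        have hlγ : l ∈ γ := hJγ ⟨le_refl l, hlm⟩
        exact absurd (csInf_le hbddB hlγ) (not_le.mpr hlw')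
      have haγ : a ∈ γ := by
        have hla : l = a := by rw [hldef, hwa']; exact max_eq_left (by linarith)
        have hmem := hJγ ⟨le_refl l, hlm⟩
        rwa [hla] at hmem
      exact hgap_eq γ hγ γa hγa a haγ haγa
  have hlg_inj : ∀ z ∈ comps, ∀ z' ∈ comps, lg z = lg z' → z = z' := by
    intro z hz z' hz' he
    have h1 : sInf z = sInf z' := by rw [← hlg_sup z hz, ← hlg_sup z' hz', he]
    exact hcomp_eq z hz z' hz' (sInf z) (hcomp_least z hz).1 (h1 ▸ (hcomp_least z' hz').1)
  have hrg_inj : ∀ z ∈ comps, ∀ z' ∈ comps, rg z = rg z' → z = z' := by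
    intro z hz z' hz' he
    have h1 : sSup z = sSup z' := by rw [← hrg_inf z hz, ← hrg_inf z' hz', he]
    exact hcomp_eq z hz z' hz' (sSup z) (hcomp_great z hz).1 (h1 ▸ (hcomp_great z' hz').1)
  have hgaps_fin : gaps.Finite := by
    apply Set.Finite.subset (Set.Finite.insert γa (hcomps_fin.image rg))
    intro γ hγ
    rcases hclass_inf γ hγ with h | ⟨z, hz, h⟩
    · exact h ▸ Set.mem_insert _ _
    · exact Set.mem_insert_of_mem _ ⟨z, hz, h.symm⟩
  have hsimple_sub : {z | IsSimpleComponent f a b c z} ⊆ comps := by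
    intro z hz
    obtain ⟨⟨t0, ht0', he⟩, _⟩ := hz
    rw [hPZ] at ht0' he
    exact ⟨t0, ht0', he⟩
  have hsg01 : ∀ γ : Set ℝ, sg γ = 0 ∨ sg γ = 1 := by
    intro γ
    by_cases hex : ∃ s ∈ γ, c.1 < (f s).1
    · right; simp only [hsgdef, if_pos hex]
    · left; simp only [hsgdef, if_neg hex]
  have hsimp : ∀ z ∈ comps, (IsSimpleComponent f a b c z ↔ sg (lg z) ≠ sg (rg z)) := by
    intro z hz
    obtain ⟨hqlW, hqllt, hIool⟩ := hql z hz
    obtain ⟨hqrW, hqrlt, hIoor⟩ := hqr z hz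
    constructor
    · rintro ⟨-, x', y', hx', hy', ε, hε, hcase⟩
      have hx'' : x' = sInf z := hx'.unique (hcomp_least z hz)
      have hy'' : y' = sSup z := hy'.unique (hcomp_great z hz)
      rw [hx'', hy''] at hcase
      set M := max (sInf z - ε) (ql z) with hM
      have hMlt : M < sInf z := max_lt (by linarith) hqllt
      set sl := (M + sInf z) / 2 with hsl
      have hsl1 : M < sl := by rw [hsl]; linarith
      have hsl2 : sl < sInf z := by rw [hsl]; linarith
      have hslIoo : sl ∈ Set.Ioo (sInf z - ε) (sInf z) :=
        ⟨lt_of_le_of_lt (le_max_left _ _) hsl1, hsl2⟩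
      have hsllg : sl ∈ lg z :=
        hlg_mem z hz sl ((le_max_right _ _).trans hsl1.le) hsl2
      set N := min (sSup z + ε) (qr z) with hN
      have hNgt : sSup z < N := lt_min (by linarith) hqrlt
      set sr := (sSup z + N) / 2 with hsr
      have hsr1 : sr < N := by rw [hsr]; linarith
      have hsr2 : sSup z < sr := by rw [hsr]; linarith
      have hsrIoo : sr ∈ Set.Ioo (sSup z) (sSup z + ε) :=
        ⟨hsr2, lt_of_lt_of_le hsr1 (min_le_left _ _)⟩
      have hsrrg : sr ∈ rg z :=
        hrg_mem z hz sr (hsr1.le.trans (min_le_right _ _)) hsr2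
      rcases hcase with ⟨hL, hR⟩ | ⟨hL, hR⟩
      · have hsgl : sg (lg z) = 0 :=
          (hsg_gap' (lg z) (hlg_gap z hz) sl hsllg).mpr (hL sl hslIoo)
        have hsgr : sg (rg z) = 1 :=
          (hsg_gap (rg z) (hrg_gap z hz) sr hsrrg).mpr (hR sr hsrIoo)
        rw [hsgl, hsgr]; decide
      · have hsgl : sg (lg z) = 1 :=
          (hsg_gap (lg z) (hlg_gap z hz) sl hsllg).mpr (hL sl hslIoo)
        have hsgr : sg (rg z) = 0 :=
          (hsg_gap' (rg z) (hrg_gap z hz) sr hsrrg).mpr (hR sr hsrIoo)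
        rw [hsgl, hsgr]; decide
    · intro hne
      obtain ⟨t0, ht0', he⟩ := id hz
      refine ⟨⟨t0, by rw [hPZ]; exact ht0', by rw [hPZ]; exact he⟩,
        sInf z, sSup z, hcomp_least z hz, hcomp_great z hz, ?_⟩
      set ε := min (sInf z - ql z) (qr z - sSup z) with hεdef
      have hεpos : (0:ℝ) < ε := lt_min (by linarith) (by linarith)
      refine ⟨ε, hεpos, ?_⟩
      have hLmem : ∀ s ∈ Set.Ioo (sInf z - ε) (sInf z), s ∈ lg z := by
        intro s hs
        have h1 : ql z ≤ s := by
          have := min_le_left (sInf z - ql z) (qr z - sSup z)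
          have h2 := hs.1
          linarith
        exact hlg_mem z hz s h1 hs.2
      have hRmem : ∀ s ∈ Set.Ioo (sSup z) (sSup z + ε), s ∈ rg z := by
        intro s hs
        have h1 : s ≤ qr z := by
          have := min_le_right (sInf z - ql z) (qr z - sSup z)
          have h2 := hs.2
          linarith
        exact hrg_mem z hz s h1 hs.1
      rcases hsg01 (lg z) with h0 | h1
      · have hr1 : sg (rg z) = 1 := by
          rcases hsg01 (rg z) with h' | h'
          · exact absurd (h0.trans h'.symm) hne
          · exact h'
        exact Or.inl ⟨fun s hs => (hsg_gap' _ (hlg_gap z hz) s (hLmem s hs)).mp h0,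
          fun s hs => (hsg_gap _ (hrg_gap z hz) s (hRmem s hs)).mp hr1⟩
      · have hr0 : sg (rg z) = 0 := by
          rcases hsg01 (rg z) with h' | h'
          · exact h'
          · exact absurd (h1.trans h'.symm) hne
        exact Or.inr ⟨fun s hs => (hsg_gap _ (hlg_gap z hz) s (hLmem s hs)).mp h1,
          fun s hs => (hsg_gap' _ (hrg_gap z hz) s (hRmem s hs)).mp hr0⟩
  -- counting
  have hsimple_fin : {z | IsSimpleComponent f a b c z}.Finite := hcomps_fin.subset hsimple_sub
  set CF := hcomps_fin.toFinset with hCF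
  set GF := hgaps_fin.toFinset with hGF
  have hγbGF : γb ∈ GF := hgaps_fin.mem_toFinset.mpr hγb
  have hγaGF : γa ∈ GF := hgaps_fin.mem_toFinset.mpr hγa
  have hvv : ∀ u : ZMod 2, u + u = 0 := by decide
  have hcard : ({z : Set ℝ | IsSimpleComponent f a b c z}.ncard : ZMod 2) =
      ∑ z ∈ CF, (if IsSimpleComponent f a b c z then (1 : ZMod 2) else 0) := by
    have hset : {z : Set ℝ | IsSimpleComponent f a b c z} =
        ↑(CF.filter (fun z => IsSimpleComponent f a b c z)) := by
      ext z
      simp only [Set.mem_setOf_eq, Finset.coe_filter, hCF, Set.Finite.mem_toFinset]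
      exact ⟨fun h' => ⟨hsimple_sub h', h'⟩, fun h' => h'.2⟩
    rw [hset, Set.ncard_coe_finset, ← Finset.sum_filter]
    rw [Finset.sum_const, nsmul_eq_mul, mul_one]
  have hstep1 : ∀ z ∈ CF, (if IsSimpleComponent f a b c z then (1 : ZMod 2) else 0) =
      sg (lg z) + sg (rg z) := by
    intro z hzin
    have hz : z ∈ comps := hcomps_fin.mem_toFinset.mp hzin
    by_cases hsimple : IsSimpleComponent f a b c z
    · rw [if_pos hsimple]
      have hne := (hsimp z hz).mp hsimple
      rcases hsg01 (lg z) with h | h <;> rcases hsg01 (rg z) with h' | h'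
      · exact absurd (h.trans h'.symm) hne
      · rw [h, h']; decide
      · rw [h, h']; decide
      · exact absurd (h.trans h'.symm) hne
    · rw [if_neg hsimple]
      have heq : sg (lg z) = sg (rg z) := by
        by_contra hne'; exact hsimple ((hsimp z hz).mpr hne')
      rw [heq, hvv]
  have hlgbij : ∑ z ∈ CF, sg (lg z) = ∑ γ ∈ GF.erase γb, sg γ := by
    apply Finset.sum_bij (i := fun z _ => lg z)
    · intro z hzin
      have hz : z ∈ comps := hcomps_fin.mem_toFinset.mp hzin
      exact Finset.mem_erase.mpr ⟨hlg_ne z hz, hgaps_fin.mem_toFinset.mpr (hlg_gap z hz)⟩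
    · intro z1 h1 z2 h2 he
      exact hlg_inj z1 (hcomps_fin.mem_toFinset.mp h1) z2 (hcomps_fin.mem_toFinset.mp h2) he
    · intro γ hγin
      obtain ⟨hne', hγin'⟩ := Finset.mem_erase.mp hγin
      rcases hclass_sup γ (hgaps_fin.mem_toFinset.mp hγin') with h' | ⟨z, hz, h'⟩
      · exact absurd h' hne'
      · exact ⟨z, hcomps_fin.mem_toFinset.mpr hz, h'.symm⟩
    · intro z hzin; rfl
  have hrgbij : ∑ z ∈ CF, sg (rg z) = ∑ γ ∈ GF.erase γa, sg γ := by
    apply Finset.sum_bij (i := fun z _ => rg z)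
    · intro z hzin
      have hz : z ∈ comps := hcomps_fin.mem_toFinset.mp hzin
      exact Finset.mem_erase.mpr ⟨hrg_ne z hz, hgaps_fin.mem_toFinset.mpr (hrg_gap z hz)⟩
    · intro z1 h1 z2 h2 he
      exact hrg_inj z1 (hcomps_fin.mem_toFinset.mp h1) z2 (hcomps_fin.mem_toFinset.mp h2) he
    · intro γ hγin
      obtain ⟨hne', hγin'⟩ := Finset.mem_erase.mp hγin
      rcases hclass_inf γ (hgaps_fin.mem_toFinset.mp hγin') with h' | ⟨z, hz, h'⟩
      · exact absurd h' hne'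
      · exact ⟨z, hcomps_fin.mem_toFinset.mpr hz, h'.symm⟩
    · intro z hzin; rfl
  have he1 : ∑ γ ∈ GF.erase γb, sg γ = ∑ γ ∈ GF, sg γ + sg γb := by
    rw [← Finset.sum_erase_add GF sg hγbGF, add_assoc, hvv, add_zero]
  have he2 : ∑ γ ∈ GF.erase γa, sg γ = ∑ γ ∈ GF, sg γ + sg γa := by
    rw [← Finset.sum_erase_add GF sg hγaGF, add_assoc, hvv, add_zero]
  have hsgab : sg γa + sg γb = 1 := by
    rcases hxor with ⟨h1, h2⟩ | ⟨h1, h2⟩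
    · have ha1 : sg γa = 1 := (hsg_gap γa hγa a haγa).mpr h1
      have hb0 : sg γb = 0 := by
        rcases hsg01 γb with h' | h'
        · exact h'
        · exact absurd ((hsg_gap γb hγb b hbγb).mp h') h2
      rw [ha1, hb0]; decide
    · have hb1 : sg γb = 1 := (hsg_gap γb hγb b hbγb).mpr h2
      have ha0 : sg γa = 0 := by
        rcases hsg01 γa with h' | h'
        · exact h'
        · exact absurd ((hsg_gap γa hγa a haγa).mp h') h1
      rw [ha0, hb1]; decide
  have hfinal : ({z : Set ℝ | IsSimpleComponent f a b c z}.ncard : ZMod 2) = 1 := by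
    rw [hcard, Finset.sum_congr rfl hstep1, Finset.sum_add_distrib, hlgbij, hrgbij,
      he1, he2]
    calc (∑ γ ∈ GF, sg γ + sg γb) + (∑ γ ∈ GF, sg γ + sg γa)
        = (∑ γ ∈ GF, sg γ + ∑ γ ∈ GF, sg γ) + (sg γa + sg γb) := by ring
      _ = 1 := by rw [hvv, zero_add, hsgab]
  rw [Nparity]
  set n := {z : Set ℝ | IsSimpleComponent f a b c z}.ncard with hndef
  rcases Nat.mod_two_eq_zero_or_one n with h2 | h2
  · exfalso
    obtain ⟨m, hm⟩ := (Nat.even_iff).mpr h2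
    rw [hm] at hfinal
    rw [Nat.cast_add, hvv] at hfinal
    exact absurd hfinal.symm (by decide)
  · exact h2
end
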